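/- The character χ_Z of an object Z of Z(G,α), defined on pairs of commuting elements (f,g) of G by χ_Z(f,g) = Tr_{Z_f}(g), satisfies the projective class-function property χ_Z(xfx^{-1}, xgx^{-1}) = [α(x,g|f)/α(xgx^{-1},x|f)] · χ_Z(f,g) for all x ∈ G and commuting f,g ∈ G. -/
import Mathlib


open scoped BigOperators

/-- `α(f,g|h) = α(f,g,h)⁻¹ · α(f, ghg⁻¹, g) · α((fg)h(fg)⁻¹, f, g)⁻¹`. -/
def aux2 {G : Type} [Group G] {k : Type} [Field k]
    (α : G → G → G → kˣ) (f g h : G) : kˣ :=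
  (α f g h)⁻¹ * α f (g * h * g⁻¹) g * (α ((f * g) * h * (f * g)⁻¹) f g)⁻¹

/-- An object of `Z(G,α)`: a finite-dimensional `G`-graded vector space (the grading
given by a complete system of orthogonal idempotent projections `p g`) together with
an `α`-projective `G`-action `ρ` compatible with the grading:
`ρ(x)(V_h) = V_{xhx⁻¹}` and `ρ(xy) = α(x,y|h)·ρ(x)ρ(y)` on `V_h`. -/
structure ZObj (k : Type) [Field k] (G : Type) [Group G] [Fintype G]
    (α : G → G → G → kˣ) where
  V : Type
  [ac : AddCommGroup V]
  [mo : Module k V]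
  [fin : Module.Finite k V]
  p : G → V →ₗ[k] V
  p_idem : ∀ g, p g ∘ₗ p g = p g
  p_orth : ∀ g h, g ≠ h → p g ∘ₗ p h = 0
  p_total : ∑ g : G, p g = LinearMap.id
  ρ : G → V →ₗ[k] V
  ρ_one : ρ 1 = LinearMap.id
  ρ_bij : ∀ g, Function.Bijective (ρ g)
  grade : ∀ g h, ρ g ∘ₗ p h = p (g * h * g⁻¹) ∘ₗ ρ g
  proj : ∀ g h x, ρ (g * h) ∘ₗ p x
    = ((aux2 α g h x : kˣ) : k) • ((ρ g ∘ₗ ρ h) ∘ₗ p x)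

attribute [instance] ZObj.ac ZObj.mo ZObj.fin

/-- The character `χ_Z(f,g) = Tr_{Z_f}(g)`, computed as the trace of the degree-`f`
projection composed with the action of `g`. -/
noncomputable def chi {k : Type} [Field k] {G : Type} [Group G] [Fintype G]
    {α : G → G → G → kˣ} (Z : ZObj k G α) (f g : G) : k :=
  LinearMap.trace k Z.V (Z.p f ∘ₗ Z.ρ g)

/-- the character of an object `Z` of `Z(G,α)` satisfies
`χ_Z(xfx⁻¹, xgx⁻¹) = (α(x,g|f)/α(xgx⁻¹,x|f)) χ_Z(f,g)` for all `x ∈ G` and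
commuting `f,g ∈ G`. -/
theorem stmt13 {k : Type} [Field k] {G : Type} [Group G] [Fintype G]
    (α : G → G → G → kˣ)
    (hcoc : ∀ f g h l : G,
      α g h l * α f (g * h) l * α f g h = α (f * g) h l * α f g (h * l))
    (hnorm : ∀ f g h : G, f = 1 ∨ g = 1 ∨ h = 1 → α f g h = 1)
    (Z : ZObj k G α) (x f g : G) (hfg : Commute f g) :
    chi Z (x * f * x⁻¹) (x * g * x⁻¹)
      = ((aux2 α x g f * (aux2 α (x * g * x⁻¹) x f)⁻¹ : kˣ) : k) * chi Z f g := by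

  classical
  set y := x * g * x⁻¹ with hy
  have c1 : kˣ := aux2 α y x f
  -- Step 1: p(xfx⁻¹) commutes with ρ(xgx⁻¹)
  have hgf : g * f * g⁻¹ = f := by rw [hfg.symm.eq, mul_inv_cancel_right]
  have hconj : y * (x * f * x⁻¹) * y⁻¹ = x * f * x⁻¹ := by
    rw [hy]
    have h' : (x * g * x⁻¹) * (x * f * x⁻¹) * (x * g * x⁻¹)⁻¹
        = x * (g * f * g⁻¹) * x⁻¹ := by group
    rw [h', hgf]
  have step1 : Z.p (x * f * x⁻¹) ∘ₗ Z.ρ y = Z.ρ y ∘ₗ Z.p (x * f * x⁻¹) := by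
    have h := Z.grade y (x * f * x⁻¹)
    rw [hconj] at h
    exact h.symm
  -- Step 2: ρ(y) ∘ ρ(x) ∘ p f = (c₂/c₁) • ρ(x) ∘ ρ(g) ∘ p f
  have hyx : y * x = x * g := by rw [hy]; group
  have h1 := Z.proj y x f
  have h2 := Z.proj x g f
  rw [hyx] at h1
  have step2 : (Z.ρ y ∘ₗ Z.ρ x) ∘ₗ Z.p f
      = ((aux2 α x g f * (aux2 α y x f)⁻¹ : kˣ) : k) • ((Z.ρ x ∘ₗ Z.ρ g) ∘ₗ Z.p f) := by
    have h3 : ((aux2 α y x f : kˣ) : k) • ((Z.ρ y ∘ₗ Z.ρ x) ∘ₗ Z.p f)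
        = ((aux2 α x g f : kˣ) : k) • ((Z.ρ x ∘ₗ Z.ρ g) ∘ₗ Z.p f) := by
      rw [← h1, ← h2]
    calc (Z.ρ y ∘ₗ Z.ρ x) ∘ₗ Z.p f
        = (((aux2 α y x f)⁻¹ : kˣ) : k) • (((aux2 α y x f : kˣ) : k)
            • ((Z.ρ y ∘ₗ Z.ρ x) ∘ₗ Z.p f)) := by
          rw [smul_smul, ← Units.val_mul, inv_mul_cancel, Units.val_one, one_smul]
      _ = (((aux2 α y x f)⁻¹ : kˣ) : k) • (((aux2 α x g f : kˣ) : k)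
            • ((Z.ρ x ∘ₗ Z.ρ g) ∘ₗ Z.p f)) := by rw [h3]
      _ = ((aux2 α x g f * (aux2 α y x f)⁻¹ : kˣ) : k)
            • ((Z.ρ x ∘ₗ Z.ρ g) ∘ₗ Z.p f) := by
          rw [smul_smul, ← Units.val_mul, mul_comm]
  -- Step 3: grade at x, f
  have step3 : Z.p (x * f * x⁻¹) ∘ₗ Z.ρ x = Z.ρ x ∘ₗ Z.p f := (Z.grade x f).symm
  -- the equiv given by ρ x
  let e : Z.V ≃ₗ[k] Z.V := LinearEquiv.ofBijective (Z.ρ x) (Z.ρ_bij x)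
  have he : (e : Z.V →ₗ[k] Z.V) = Z.ρ x := rfl
  set c : k := ((aux2 α x g f * (aux2 α y x f)⁻¹ : kˣ) : k) with hc
  have key : Z.p (x * f * x⁻¹) ∘ₗ Z.ρ y
      = c • ((e : Z.V →ₗ[k] Z.V) ∘ₗ ((Z.ρ g ∘ₗ Z.p f) ∘ₗ (e.symm : Z.V →ₗ[k] Z.V))) := by
    have hA : (Z.p (x * f * x⁻¹) ∘ₗ Z.ρ y) ∘ₗ Z.ρ x
        = c • (Z.ρ x ∘ₗ (Z.ρ g ∘ₗ Z.p f)) := by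
      calc (Z.p (x * f * x⁻¹) ∘ₗ Z.ρ y) ∘ₗ Z.ρ x
          = (Z.ρ y ∘ₗ Z.p (x * f * x⁻¹)) ∘ₗ Z.ρ x := by rw [step1]
        _ = Z.ρ y ∘ₗ (Z.p (x * f * x⁻¹) ∘ₗ Z.ρ x) := by rw [LinearMap.comp_assoc]
        _ = Z.ρ y ∘ₗ (Z.ρ x ∘ₗ Z.p f) := by rw [step3]
        _ = (Z.ρ y ∘ₗ Z.ρ x) ∘ₗ Z.p f := by rw [LinearMap.comp_assoc]
        _ = c • ((Z.ρ x ∘ₗ Z.ρ g) ∘ₗ Z.p f) := step2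
        _ = c • (Z.ρ x ∘ₗ (Z.ρ g ∘ₗ Z.p f)) := by rw [LinearMap.comp_assoc]
    ext v
    have := congrArg (fun (T : Z.V →ₗ[k] Z.V) => T (e.symm v)) hA
    simp only [LinearMap.comp_apply, LinearMap.smul_apply] at this ⊢
    have hev : Z.ρ x (e.symm v) = v := e.apply_symm_apply v
    rw [hev] at this
    rw [this]
    rfl
  have htr : LinearMap.trace k Z.V ((e : Z.V →ₗ[k] Z.V) ∘ₗ ((Z.ρ g ∘ₗ Z.p f) ∘ₗ (e.symm : Z.V →ₗ[k] Z.V)))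
      = LinearMap.trace k Z.V (Z.ρ g ∘ₗ Z.p f) := by
    rw [← LinearMap.comp_assoc, LinearMap.trace_comp_comm']
    have hmaps : (e.symm : Z.V →ₗ[k] Z.V) ∘ₗ ((e : Z.V →ₗ[k] Z.V) ∘ₗ (Z.ρ g ∘ₗ Z.p f))
        = Z.ρ g ∘ₗ Z.p f := by
      ext v; simp [he]
      exact e.symm_apply_apply _
    rw [hmaps]
  calc chi Z (x * f * x⁻¹) (x * g * x⁻¹)
      = LinearMap.trace k Z.V (Z.p (x * f * x⁻¹) ∘ₗ Z.ρ y) := rfl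
    _ = c * LinearMap.trace k Z.V (Z.ρ g ∘ₗ Z.p f) := by
        rw [key, map_smul, htr]; rfl
    _ = c * chi Z f g := by
        rw [chi, LinearMap.trace_comp_comm']
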